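/- Let θ_0, …, θ_d be d+1 mutually distinct elements of F (d ≥ 1) such that θ_i² - (q² + q⁻²)θ_i θ_j + θ_j² + (q² - q⁻²)² = 0 whenever |i - j| = 1. Then there exists a nonzero a ∈ F with θ_i = a q^{d-2i} + a⁻¹ q^{2i-d} for 0 ≤ i ≤ d. -/
import Mathlib


open Finset

variable {F : Type*} [Field F] {A : Type*} [Ring A] [Algebra F A]

/-- The quantum adjoint map `ad_r a : x ↦ q^r a x - q^{-r} x a`. -/
noncomputable def qad (q : F) (a : A) (r : ℤ) (x : A) : A :=
  q ^ r • (a * x) - q ^ (-r) • (x * a)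

/-- `bad_m a` : the balanced version of `ad`. -/
noncomputable def bad (q : F) (a : A) : ℕ → A → A
  | 0, x => (q - q⁻¹)⁻¹ • qad q a 0 x
  | (m + 1), x =>
      (((q ^ (2 * (m + 1) : ℤ) - q ^ (-(2 * (m + 1)) : ℤ)) *
          (q ^ (2 * (m + 1) + 1 : ℤ) - q ^ (-(2 * (m + 1)) - 1 : ℤ)))⁻¹) •
        ((q ^ (2 * (m + 1) : ℤ) - q ^ (-(2 * (m + 1)) : ℤ)) ^ 2 • x +
          qad q a ((m : ℤ) + 1) (qad q a (-((m : ℤ) + 1)) x))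

/-- `(bad a)_m = bad_{m-1} a ∘ ⋯ ∘ bad_0 a`, with `(bad a)_0 = id`. -/
noncomputable def badProd (q : F) (a : A) : ℕ → A → A
  | 0 => id
  | (m + 1) => bad q a m ∘ badProd q a m

/-- `S_m = (bad a)_m ∘ (ad_m a) / (q^{2m} - q^{-2m})`, with `S_0 = id`. -/
noncomputable def Smap (q : F) (a : A) : ℕ → A → A
  | 0 => id
  | (m + 1) => fun x =>
      (q ^ (2 * (m + 1) : ℤ) - q ^ (-(2 * (m + 1)) : ℤ))⁻¹ •
        badProd q a (m + 1) (qad q a ((m : ℤ) + 1) x)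

/-- `S'_m = (bad a)_m ∘ (ad_{-m} a) / (q^{2m} - q^{-2m})`, with `S'_0 = id`. -/
noncomputable def Smap' (q : F) (a : A) : ℕ → A → A
  | 0 => id
  | (m + 1) => fun x =>
      (q ^ (2 * (m + 1) : ℤ) - q ^ (-(2 * (m + 1)) : ℤ))⁻¹ •
        badProd q a (m + 1) (qad q a (-((m : ℤ) + 1)) x)

lemma quad_factor' {F : Type*} [Field F] (a b c c' s s' X : F)
    (hcc : c * c' = 1) (hss : s * s' = 1) (hab : a * b = 1)
    (h : (a * c + b * c') ^ 2 - (s + s') * (a * c + b * c') * X + X ^ 2 +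
      (s - s') ^ 2 = 0) :
    X = a * (c * s') + b * (c' * s) ∨ X = a * (c * s) + b * (c' * s') := by
  have h2 : (X - (a * (c * s') + b * (c' * s))) * (X - (a * (c * s) + b * (c' * s'))) = 0 := by
    linear_combination h + (a^2*c^2 + b^2*c'^2 + 2) * hss + (s^2 + s'^2 - 2)*c*c' * hab
      + (s^2 + s'^2 - 2) * hcc
  rcases mul_eq_zero.mp h2 with h3 | h3
  · exact Or.inl (sub_eq_zero.mp h3)
  · exact Or.inr (sub_eq_zero.mp h3)

theorem stmt15 (q : F) (hq : q ≠ 0) (hroot : ∀ n : ℕ, 0 < n → q ^ n ≠ 1) (d : ℕ) (hd : 1 ≤ d) (θ : ℕ → F)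
    (hdist : ∀ i ≤ d, ∀ j ≤ d, θ i = θ j → i = j)
    (hrec : ∀ i ≤ d, ∀ j ≤ d, (i + 1 = j ∨ j + 1 = i) →
      θ i ^ 2 - (q ^ (2 : ℤ) + q ^ (-2 : ℤ)) * θ i * θ j + θ j ^ 2 +
        (q ^ (2 : ℤ) - q ^ (-2 : ℤ)) ^ 2 = 0) :
    ∃ a : F, a ≠ 0 ∧ ∀ i ≤ d, θ i = a * q ^ ((d : ℤ) - 2 * i) + a⁻¹ * q ^ (2 * (i : ℤ) - d) := by
  have hz : ∀ e : ℤ, q ^ e ≠ 0 := fun e => zpow_ne_zero e hq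
  have hs2 : q ^ (2:ℤ) * q ^ (-2:ℤ) = 1 := by rw [← zpow_add₀ hq]; norm_num
  have ht : q ^ (2:ℤ) - q ^ (-2:ℤ) ≠ 0 := by
    intro h
    apply hroot 4 (by norm_num)
    have h2 : q ^ (2:ℤ) = q ^ (-2:ℤ) := sub_eq_zero.mp h
    have h4 : q ^ (4:ℤ) = 1 := by
      calc q ^ (4:ℤ) = q ^ (2:ℤ) * q ^ (2:ℤ) := by rw [← zpow_add₀ hq]; norm_num
        _ = q ^ (2:ℤ) * q ^ (-2:ℤ) := by nth_rewrite 2 [h2]; rfl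
        _ = 1 := hs2
    have h6 : ((4:ℕ) : ℤ) = (4:ℤ) := by norm_num
    rw [← h6, zpow_natCast] at h4
    exact h4
  set u := (q ^ (2:ℤ) - q ^ (-2:ℤ))⁻¹ with hudef
  have hti : (q ^ (2:ℤ) - q ^ (-2:ℤ)) * u = 1 := mul_inv_cancel₀ ht
  set α := (q ^ (2:ℤ) * θ 0 - θ 1) * u with hαdef
  set β := (θ 1 - q ^ (-2:ℤ) * θ 0) * u with hβdef
  have h01 := hrec 0 (by omega) 1 hd (Or.inl rfl)
  have hab : α * β = 1 := by
    rw [hαdef, hβdef]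
    linear_combination (-u^2) * h01 + (-u^2 * θ 0 ^2) * hs2 +
      ((q ^ (2:ℤ) - q ^ (-2:ℤ)) * u + 1) * hti
  have hα : α ≠ 0 := left_ne_zero_of_mul_eq_one hab
  have key : ∀ i : ℕ, i + 1 ≤ d →
      θ i = α * q ^ (-(2 * (i:ℤ))) + β * q ^ (2 * (i:ℤ)) ∧
      θ (i+1) = α * q ^ (-(2 * ((i:ℤ)+1))) + β * q ^ (2 * ((i:ℤ)+1)) := by
    intro i
    induction i with
    | zero =>
      intro _
      constructor
      · have z1 : (-(2 * ((0:ℕ):ℤ))) = 0 := by norm_num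
        have z2 : (2 * ((0:ℕ):ℤ)) = 0 := by norm_num
        rw [z1, z2, zpow_zero, mul_one, mul_one, hαdef, hβdef]
        linear_combination (-(θ 0)) * hti
      · have z1 : (-(2 * (((0:ℕ):ℤ)+1))) = (-2:ℤ) := by norm_num
        have z2 : (2 * (((0:ℕ):ℤ)+1)) = (2:ℤ) := by norm_num
        rw [z1, z2, hαdef, hβdef]
        linear_combination (-(θ 1)) * hti
    | succ i ih =>
      intro hle
      have ihh := ih (by omega)
      refine ⟨ihh.2, ?_⟩
      have hr := hrec (i+1) (by omega) (i+2) (by omega) (Or.inl rfl)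
      have hc : q ^ (-(2 * ((i:ℤ)+1))) * q ^ (2 * ((i:ℤ)+1)) = 1 := by
        rw [← zpow_add₀ hq]; simp
      have hfact := quad_factor' α β (q ^ (-(2 * ((i:ℤ)+1)))) (q ^ (2 * ((i:ℤ)+1)))
        (q ^ (2:ℤ)) (q ^ (-2:ℤ)) (θ (i+2)) hc hs2 hab ?_
      · have e1x : (-(2*((i:ℤ)+1))) + (-2) = -(2*(((i+1:ℕ):ℤ)+1)) := by push_cast; ring
        have em1 : q ^ (-(2 * ((i:ℤ)+1))) * q ^ (-2:ℤ) = q ^ (-(2*(((i+1:ℕ):ℤ)+1))) := by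
          rw [← zpow_add₀ hq, e1x]
        have e2x : (2*((i:ℤ)+1)) + 2 = 2*(((i+1:ℕ):ℤ)+1) := by push_cast; ring
        have em2 : q ^ (2 * ((i:ℤ)+1)) * q ^ (2:ℤ) = q ^ (2*(((i+1:ℕ):ℤ)+1)) := by
          rw [← zpow_add₀ hq, e2x]
        have e3x : (-(2*((i:ℤ)+1))) + 2 = -(2*(i:ℤ)) := by ring
        have em3 : q ^ (-(2 * ((i:ℤ)+1))) * q ^ (2:ℤ) = q ^ (-(2*(i:ℤ))) := by
          rw [← zpow_add₀ hq, e3x]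
        have e4x : (2*((i:ℤ)+1)) + (-2) = 2*(i:ℤ) := by ring
        have em4 : q ^ (2 * ((i:ℤ)+1)) * q ^ (-2:ℤ) = q ^ (2*(i:ℤ)) := by
          rw [← zpow_add₀ hq, e4x]
        rcases hfact with h1 | h1
        · rw [em1, em2] at h1
          exact h1
        · rw [em3, em4] at h1
          exfalso
          have h2 : i + 2 = i := hdist (i+2) (by omega) i (by omega) (h1.trans ihh.1.symm)
          omega
      · rw [← ihh.2]
        exact hr
  obtain ⟨e, rfl⟩ : ∃ e, d = e + 1 := ⟨d - 1, by omega⟩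
  refine ⟨α * q ^ (-((e+1:ℕ):ℤ)), mul_ne_zero hα (hz _), ?_⟩
  set a := α * q ^ (-((e+1:ℕ):ℤ)) with hadef
  have hqd : q ^ (-((e+1:ℕ):ℤ)) * q ^ (((e+1:ℕ):ℤ)) = 1 := by
    have hz0 : (-((e+1:ℕ):ℤ)) + (((e+1:ℕ):ℤ)) = 0 := by ring
    rw [← zpow_add₀ hq, hz0, zpow_zero]
  have hainv : a⁻¹ = β * q ^ (((e+1:ℕ):ℤ)) := by
    refine inv_eq_of_mul_eq_one_right ?_
    rw [hadef]
    calc α * q ^ (-((e+1:ℕ):ℤ)) * (β * q ^ (((e+1:ℕ):ℤ)))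
        = (α * β) * (q ^ (-((e+1:ℕ):ℤ)) * q ^ (((e+1:ℕ):ℤ))) := by ring
      _ = 1 := by rw [hab, hqd, mul_one]
  intro i hi
  have hkey : θ i = α * q ^ (-(2 * (i:ℤ))) + β * q ^ (2 * (i:ℤ)) := by
    rcases Nat.lt_or_ge i (e+1) with h | h
    · exact (key i (by omega)).1
    · have hie : i = e + 1 := by omega
      subst hie
      have hk := (key e (by omega)).2
      have ec : ((e:ℤ)+1) = ((e+1:ℕ):ℤ) := by push_cast; ring
      rw [ec] at hk
      exact hk
  rw [hkey, hainv, hadef]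
  have E1 : α * q ^ (-((e+1:ℕ):ℤ)) * q ^ ((((e+1:ℕ)):ℤ) - 2*(i:ℤ)) = α * q ^ (-(2*(i:ℤ))) := by
    rw [mul_assoc, ← zpow_add₀ hq]
    have : (-((e+1:ℕ):ℤ)) + ((((e+1:ℕ)):ℤ) - 2*(i:ℤ)) = -(2*(i:ℤ)) := by ring
    rw [this]
  have E2 : β * q ^ (((e+1:ℕ):ℤ)) * q ^ (2*(i:ℤ) - (((e+1:ℕ)):ℤ)) = β * q ^ (2*(i:ℤ)) := by
    rw [mul_assoc, ← zpow_add₀ hq]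
    have : (((e+1:ℕ):ℤ)) + (2*(i:ℤ) - (((e+1:ℕ)):ℤ)) = 2*(i:ℤ) := by ring
    rw [this]
  rw [E1, E2]
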